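/- arXiv:1303.4222 — 2 statements merged into one kernel-verified Lean document; each statement's English description precedes it below -/
import Mathlib

section
/- Let I : (0,∞) → (0,∞) be locally Lipschitz with I(t₁)-I(t₀) = ∫_{t₀}^{t₁} I'(s) ds for 0 < t₀ ≤ t₁, and suppose Ch := inf_{t>0} I(t)/t satisfies Ch < I(t)/t for every t > 0 and lim_{t→∞} I(t)/t = Ch. Then for every n ∈ ℕ there exists Tₙ > n with left derivative I'₋(Tₙ) < Ch + 2/n. In particular liminf_{t→∞} I'₋(t) ≤ Ch. -/
open MeasureTheory Set Filter

/-- If `I : (0,∞) → (0,∞)` is locally Lipschitz, satisfies the fundamental theorem of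
calculus, has left derivatives everywhere, `Ch = inf_{t>0} I t / t` with `Ch < I t / t`
for all `t`, and `I t / t → Ch`, then for every `n` there is `Tₙ > n` whose left
derivative is less than `Ch + 2/n`. -/
theorem stmt_3 (I : ℝ → ℝ) (Ch : ℝ)
    (hCh : Ch = sInf {x : ℝ | ∃ s : ℝ, 0 < s ∧ x = I s / s})
    (hpos : ∀ t : ℝ, 0 < t → 0 < I t)
    (hLip : ∀ a b : ℝ, 0 < a → ∃ K : NNReal, LipschitzOnWith K I (Set.Icc a b))
    (hFTC : ∀ t₀ t₁ : ℝ, 0 < t₀ → t₀ ≤ t₁ →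
      I t₁ - I t₀ = ∫ t in t₀..t₁, deriv I t)
    (hleft : ∀ t : ℝ, 0 < t → ∃ d : ℝ, HasDerivWithinAt I d (Set.Iic t) t)
    (hstrict : ∀ t : ℝ, 0 < t → Ch < I t / t)
    (hlim : Filter.Tendsto (fun t => I t / t) Filter.atTop (nhds Ch)) :
    ∀ n : ℕ, 0 < n → ∃ T : ℝ, (n : ℝ) < T ∧
      ∀ d : ℝ, HasDerivWithinAt I d (Set.Iic T) T → d < Ch + 2 / n := by
  intro n hn
  by_contra hcon
  push_neg at hcon
  obtain ⟨c, hc⟩ : ∃ c : ℝ, c = Ch + 2 / n := ⟨_, rfl⟩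
  rw [← hc] at hcon
  have hn0 : (0:ℝ) < (n:ℝ) := by exact_mod_cast hn
  have hcCh : Ch < c := by
    have : (0:ℝ) < 2 / n := by positivity
    linarith
  -- Main claim: linear growth below I
  have key : ∀ t₁ : ℝ, (n:ℝ) + 1 ≤ t₁ → c * (t₁ - ((n:ℝ) + 1)) ≤ I t₁ - I ((n:ℝ) + 1) := by
    intro t₁ ht₁
    obtain ⟨K, hK⟩ := hLip (n:ℝ) (t₁ + 1) hn0
    obtain ⟨g, gLip, hEq⟩ := hK.extend_real
    -- a.e. facts about deriv I on Ioc (n+1) t₁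
    have hmaster : ∀ᵐ s : ℝ, s ∈ Set.Ioc ((n:ℝ) + 1) t₁ →
        (c ≤ deriv I s ∧ |deriv I s| ≤ (K : ℝ)) := by
      filter_upwards [gLip.ae_differentiableAt (μ := volume)] with s hgs hs
      have hsIoo : s ∈ Set.Ioo (n:ℝ) (t₁ + 1) := ⟨by linarith [hs.1], by linarith [hs.2]⟩
      have hnb : Set.Ioo (n:ℝ) (t₁ + 1) ∈ nhds s := isOpen_Ioo.mem_nhds hsIoo
      have hIg : I =ᶠ[nhds s] g := by
        filter_upwards [hnb] with x hx
        exact hEq (Set.Ioo_subset_Icc_self hx)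
      have hdiffI : DifferentiableAt ℝ I s := hgs.congr_of_eventuallyEq hIg
      have hdI : HasDerivAt I (deriv I s) s := hdiffI.hasDerivAt
      obtain ⟨d, hdw, hdc⟩ := hcon s (by linarith [hs.1])
      have hu : UniqueDiffWithinAt ℝ (Set.Iic s) s :=
        uniqueDiffOn_Iic s s Set.self_mem_Iic
      have hde : d = deriv I s := by
        rw [← hdw.derivWithin hu, ← (hdI.hasDerivWithinAt (s := Set.Iic s)).derivWithin hu]
      constructor
      · rw [← hde]; exact hdc
      · have : deriv I s = deriv g s := hIg.deriv_eq
        rw [this, ← Real.norm_eq_abs]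
        exact norm_deriv_le_of_lipschitz gLip
    have hle : (n:ℝ) + 1 ≤ t₁ := ht₁
    -- integrability of deriv I
    have hint : IntervalIntegrable (deriv I) volume ((n:ℝ) + 1) t₁ := by
      apply IntervalIntegrable.mono_fun' (g := fun _ => (K : ℝ))
        intervalIntegrable_const
      · exact (measurable_deriv I).aestronglyMeasurable
      · have : Set.uIoc ((n:ℝ)+1) t₁ = Set.Ioc ((n:ℝ)+1) t₁ := Set.uIoc_of_le hle
        rw [this]
        filter_upwards [ae_restrict_of_ae hmaster, ae_restrict_mem measurableSet_Ioc]
          with s h1 h2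
        simpa [Real.norm_eq_abs] using (h1 h2).2
    have hintc : IntervalIntegrable (fun _ : ℝ => c) volume ((n:ℝ) + 1) t₁ :=
      intervalIntegrable_const
    -- compare integrals
    have hmono : (∫ s in ((n:ℝ)+1)..t₁, c) ≤ ∫ s in ((n:ℝ)+1)..t₁, deriv I s := by
      apply intervalIntegral.integral_mono_ae_restrict hle hintc hint
      have hne : ∀ᵐ s : ℝ, s ≠ (n:ℝ) + 1 := by
        rw [ae_iff]
        convert Real.volume_singleton (a := (n:ℝ)+1) using 2
        ext x; simp
      filter_upwards [ae_restrict_of_ae hmaster, ae_restrict_of_ae hne,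
        ae_restrict_mem measurableSet_Icc] with s h1 h2 h3
      exact (h1 ⟨lt_of_le_of_ne h3.1 (Ne.symm h2), h3.2⟩).1
    have hFTC' := hFTC ((n:ℝ)+1) t₁ (by linarith) hle
    rw [intervalIntegral.integral_const, smul_eq_mul, mul_comm] at hmono
    linarith
  -- derive the contradiction with the limit
  set A : ℝ := I ((n:ℝ) + 1) with hA
  have htend : Tendsto (fun t : ℝ => (A - c * ((n:ℝ)+1)) / t + c) atTop
      (nhds (0 + c)) := by
    exact (Filter.Tendsto.div_atTop tendsto_const_nhds tendsto_id).add tendsto_const_nhds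
  rw [zero_add] at htend
  have hev : ∀ᶠ t in atTop, (A - c * ((n:ℝ)+1)) / t + c ≤ I t / t := by
    filter_upwards [eventually_ge_atTop ((n:ℝ)+1)] with t ht
    have ht0 : (0:ℝ) < t := by linarith
    have h1 := key t ht
    have h2 : (A - c * ((n:ℝ)+1)) + c * t ≤ I t := by linarith
    calc (A - c * ((n:ℝ)+1)) / t + c = ((A - c * ((n:ℝ)+1)) + c * t) / t := by
          field_simp
      _ ≤ I t / t := (div_le_div_iff_of_pos_right ht0).mpr h2
  have : c ≤ Ch := le_of_tendsto_of_tendsto htend hlim hev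
  linarith
end

section
/- Let I : (0,∞) → (0,∞) satisfy: (i) Ch := inf_{t>0} I(t)/t with Ch < I(t)/t for all t > 0, (ii) I is locally Lipschitz with I(t₁)-I(t₀)=∫_{t₀}^{t₁} I' a.e., (iii) there exists V₀ > 0 such that I'₊(t) ≤ Ch/2 for all t ≥ V₀ (at points where the right derivative exists). Then Ch = 0. -/
/-- If `Ch = inf_{t>0} I t / t` is never attained, `I` satisfies the fundamental theorem
of calculus, and all right derivatives of `I` beyond some volume `V₀` are at most `Ch/2`,
then `Ch = 0`. -/
theorem stmt_4 (I : ℝ → ℝ) (Ch : ℝ)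
    (hCh : Ch = sInf {x : ℝ | ∃ s : ℝ, 0 < s ∧ x = I s / s})
    (hpos : ∀ t : ℝ, 0 < t → 0 < I t)
    (hstrict : ∀ t : ℝ, 0 < t → Ch < I t / t)
    (hFTC : ∀ t₀ t₁ : ℝ, 0 < t₀ → t₀ ≤ t₁ →
      I t₁ - I t₀ = ∫ t in t₀..t₁, deriv I t)
    (V₀ : ℝ) (hV₀ : 0 < V₀)
    (hderiv : ∀ t : ℝ, V₀ ≤ t → ∀ d : ℝ,
      HasDerivWithinAt I d (Set.Ici t) t → d ≤ Ch / 2) :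
    Ch = 0 := by
  have hCh0 : 0 ≤ Ch := by
    rw [hCh]
    refine le_csInf ⟨I 1 / 1, ⟨1, one_pos, rfl⟩⟩ ?_
    rintro x ⟨s, hs, rfl⟩
    have := hpos s hs
    positivity
  by_contra hne
  have hChpos : 0 < Ch := lt_of_le_of_ne hCh0 (Ne.symm hne)
  have hd : ∀ t, V₀ ≤ t → deriv I t ≤ Ch / 2 := by
    intro t ht
    by_cases hdiff : DifferentiableAt ℝ I t
    · exact hderiv t ht _ hdiff.hasDerivAt.hasDerivWithinAt
    · rw [deriv_zero_of_not_differentiableAt hdiff]; linarith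
  set T := max V₀ (2 * I V₀ / Ch) with hT
  have hT1 : V₀ ≤ T := le_max_left _ _
  have hT2 : 2 * I V₀ / Ch ≤ T := le_max_right _ _
  have hTpos : 0 < T := lt_of_lt_of_le hV₀ hT1
  have hint : I T - I V₀ = ∫ t in V₀..T, deriv I t := hFTC V₀ T hV₀ hT1
  have hbound : (∫ t in V₀..T, deriv I t) ≤ Ch / 2 * (T - V₀) := by
    by_cases hInt : IntervalIntegrable (deriv I) MeasureTheory.volume V₀ T
    · calc (∫ t in V₀..T, deriv I t) ≤ ∫ _t in V₀..T, Ch / 2 := by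
            apply intervalIntegral.integral_mono_on hT1 hInt intervalIntegrable_const
            intro x hx; exact hd x hx.1
        _ = Ch / 2 * (T - V₀) := by
            rw [intervalIntegral.integral_const]; ring_nf
    · rw [intervalIntegral.integral_undef hInt]
      nlinarith
  have hIT : I T ≤ I V₀ + Ch / 2 * (T - V₀) := by linarith
  have h1 : Ch < I T / T := hstrict T hTpos
  have h2 : I T / T ≤ Ch := by
    rw [div_le_iff₀ hTpos]
    rw [div_le_iff₀ hChpos] at hT2
    nlinarith
  linarith
end
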